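/- For jointly distributed discrete random variables where (X_v)_{v∈O_l} are mutually independent, the function (U, W) ↦ I(X_U ; Ŷ_W | X_{O_l \ U}), defined for U ⊆ O_l and W ⊆ O_{l+1}, is bisubmodular: I(X_{U₁∪U₂}; Ŷ_{W₁∩W₂} | X_{O_l \ (U₁∪U₂)}) + I(X_{U₁∩U₂}; Ŷ_{W₁∪W₂} | X_{O_l \ (U₁∩U₂)}) ≤ I(X_{U₁}; Ŷ_{W₁} | X_{O_l \ U₁}) + I(X_{U₂}; Ŷ_{W₂} | X_{O_l \ U₂}). -/

import Mathlib

open Finset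

set_option synthInstance.maxSize 1024
set_option maxHeartbeats 1000000

noncomputable section

/-- Probability that the discrete random variable `Z` takes the value `b`,
under the weight function `p` on the finite sample space `Ω`. -/
def prOf {Ω : Type} [Fintype Ω] (p : Ω → ℝ) {β : Type} [DecidableEq β]
    (Z : Ω → β) (b : β) : ℝ :=
  ∑ ω, if Z ω = b then p ω else 0

/-- Shannon entropy (base 2) of a discrete random variable. -/
def ent {Ω : Type} [Fintype Ω] (p : Ω → ℝ) {β : Type} [Fintype β] [DecidableEq β]
    (Z : Ω → β) : ℝ :=
  -∑ b, prOf p Z b * Real.logb 2 (prOf p Z b)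

/-- Conditional entropy `H(Z | W)`. -/
def condEnt {Ω : Type} [Fintype Ω] (p : Ω → ℝ) {β γ : Type} [Fintype β] [DecidableEq β]
    [Fintype γ] [DecidableEq γ] (Z : Ω → β) (W : Ω → γ) : ℝ :=
  ent p (fun ω => (Z ω, W ω)) - ent p W

/-- Mutual information `I(Z₁; Z₂)`. -/
def mi {Ω : Type} [Fintype Ω] (p : Ω → ℝ) {β₁ β₂ : Type} [Fintype β₁] [DecidableEq β₁]
    [Fintype β₂] [DecidableEq β₂] (Z₁ : Ω → β₁) (Z₂ : Ω → β₂) : ℝ :=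
  ent p Z₁ + ent p Z₂ - ent p (fun ω => (Z₁ ω, Z₂ ω))

/-- Conditional mutual information `I(Z₁; Z₂ | W)`. -/
def condMI {Ω : Type} [Fintype Ω] (p : Ω → ℝ) {β₁ β₂ γ : Type} [Fintype β₁] [DecidableEq β₁]
    [Fintype β₂] [DecidableEq β₂] [Fintype γ] [DecidableEq γ]
    (Z₁ : Ω → β₁) (Z₂ : Ω → β₂) (W : Ω → γ) : ℝ :=
  condEnt p Z₁ W + condEnt p Z₂ W - condEnt p (fun ω => (Z₁ ω, Z₂ ω)) W

/-- The joint random variable `(X_a)_{a ∈ A}` over a finite index set `A`. -/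
def joint {Ω ι β : Type} (X : ι → Ω → β) (A : Finset ι) : Ω → (A → β) :=
  fun ω a => X a.1 ω

variable {Ω : Type} [Fintype Ω] (p : Ω → ℝ)

lemma prOf_nonneg (hp : ∀ ω, 0 ≤ p ω) {β : Type} [DecidableEq β] (Z : Ω → β) (b : β) :
    0 ≤ prOf p Z b := by
  apply Finset.sum_nonneg; intro ω _; split <;> simp [hp ω]

lemma sum_prOf (hp1 : ∑ ω, p ω = 1) {β : Type} [Fintype β] [DecidableEq β] (Z : Ω → β) :
    ∑ b, prOf p Z b = 1 := by
  rw [← hp1]; unfold prOf; rw [Finset.sum_comm]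
  exact Finset.sum_congr rfl fun ω _ => by simp

lemma prOf_comp {β δ : Type} [Fintype β] [DecidableEq β] [DecidableEq δ]
    (g : β → δ) (Z : Ω → β) (c : δ) :
    prOf p (fun ω => g (Z ω)) c = ∑ b, if g b = c then prOf p Z b else 0 := by
  unfold prOf
  have h1 : ∀ b, (if g b = c then ∑ ω, if Z ω = b then p ω else 0 else 0)
      = ∑ ω, if Z ω = b ∧ g b = c then p ω else 0 := by
    intro b; split <;> simp_all
  simp only [h1]
  rw [Finset.sum_comm]
  refine Finset.sum_congr rfl fun ω _ => ?_
  rw [Finset.sum_eq_single (Z ω)]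
  · simp
  · intro b _ hb; rw [if_neg (by rintro ⟨h, _⟩; exact hb h.symm)]
  · simp
lemma prOf_le_comp (hp : ∀ ω, 0 ≤ p ω) {β δ : Type} [DecidableEq β] [DecidableEq δ]
    (g : β → δ) (Z : Ω → β) (b : β) :
    prOf p Z b ≤ prOf p (fun ω => g (Z ω)) (g b) := by
  apply Finset.sum_le_sum; intro ω _
  by_cases h : Z ω = b
  · simp [h, hp ω]
  · simp only [if_neg h]; split <;> simp [hp ω]

lemma ent_congr_inj {β δ : Type} [Fintype β] [DecidableEq β] [Fintype δ] [DecidableEq δ]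
    (Z' : Ω → δ) (Z : Ω → β) (g : β → δ) (hg : Function.Injective g)
    (h : ∀ ω, Z' ω = g (Z ω)) : ent p Z' = ent p Z := by
  have hZ' : Z' = fun ω => g (Z ω) := funext h
  subst hZ'
  unfold ent
  congr 1
  have himg : ∀ c ∉ Finset.univ.image g, prOf p (fun ω => g (Z ω)) c = 0 := by
    intro c hc
    rw [prOf_comp]
    apply Finset.sum_eq_zero; intro b _
    rw [if_neg]; intro hgb; exact hc (Finset.mem_image.2 ⟨b, Finset.mem_univ b, hgb⟩)
  rw [← Finset.sum_subset (Finset.subset_univ (Finset.univ.image g))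
    (fun c _ hc => by rw [himg c hc]; simp)]
  rw [Finset.sum_image (fun a _ b _ hab => hg hab)]
  refine Finset.sum_congr rfl fun b _ => ?_
  have : prOf p (fun ω => g (Z ω)) (g b) = prOf p Z b := by
    rw [prOf_comp]
    rw [Finset.sum_eq_single b]
    · simp
    · intro c _ hc; rw [if_neg (fun hgc => hc (hg hgc))]
    · simp
  rw [this]

lemma sum_prOf_pair_fst {β δ : Type} [Fintype β] [DecidableEq β] [DecidableEq δ]
    (Z : Ω → β) (W : Ω → δ) (c : δ) :
    ∑ a, prOf p (fun ω => (Z ω, W ω)) (a, c) = prOf p W c := by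
  unfold prOf
  rw [Finset.sum_comm]
  refine Finset.sum_congr rfl fun ω _ => ?_
  simp only [Prod.mk.injEq]
  rw [Finset.sum_eq_single (Z ω)]
  · simp
  · intro b _ hb; rw [if_neg (by rintro ⟨h, _⟩; exact hb h.symm)]
  · simp

lemma sum_prOf_pair_snd {β δ : Type} [Fintype δ] [DecidableEq β] [DecidableEq δ]
    (Z : Ω → β) (W : Ω → δ) (a : β) :
    ∑ c, prOf p (fun ω => (Z ω, W ω)) (a, c) = prOf p Z a := by
  unfold prOf
  rw [Finset.sum_comm]
  refine Finset.sum_congr rfl fun ω _ => ?_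
  simp only [Prod.mk.injEq]
  rw [Finset.sum_eq_single (W ω)]
  · simp
  · intro b _ hb; rw [if_neg (by rintro ⟨_, h⟩; exact hb h.symm)]
  · simp



lemma ent_comp_eq_sum {β δ : Type} [Fintype β] [DecidableEq β] [Fintype δ] [DecidableEq δ]
    (g : β → δ) (T : Ω → β) :
    ent p (fun ω => g (T ω)) =
      -∑ b, prOf p T b * Real.logb 2 (prOf p (fun ω => g (T ω)) (g b)) := by
  unfold ent
  congr 1
  have h1 : ∀ d, prOf p (fun ω => g (T ω)) d * Real.logb 2 (prOf p (fun ω => g (T ω)) d)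
      = ∑ b, if g b = d then prOf p T b * Real.logb 2 (prOf p (fun ω => g (T ω)) (g b)) else 0 := by
    intro d
    nth_rewrite 1 [prOf_comp p g T d]
    rw [Finset.sum_mul]
    refine Finset.sum_congr rfl fun b _ => ?_
    by_cases h : g b = d
    · rw [if_pos h, if_pos h, h]
    · rw [if_neg h, if_neg h, zero_mul]
  simp only [h1]
  rw [Finset.sum_comm]
  refine Finset.sum_congr rfl fun b _ => by simp

lemma prOf_comp_inj {β δ : Type} [Fintype β] [DecidableEq β] [DecidableEq δ]
    (g : β → δ) (hg : Function.Injective g) (T : Ω → β) (b : β) :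
    prOf p (fun ω => g (T ω)) (g b) = prOf p T b := by
  unfold prOf
  refine Finset.sum_congr rfl fun ω _ => ?_
  simp only [hg.eq_iff]

lemma condMI_nonneg (hp : ∀ ω, 0 ≤ p ω) (hp1 : ∑ ω, p ω = 1)
    {β₁ β₂ γ : Type} [Fintype β₁] [DecidableEq β₁] [Fintype β₂] [DecidableEq β₂]
    [Fintype γ] [DecidableEq γ] (Z₁ : Ω → β₁) (Z₂ : Ω → β₂) (W : Ω → γ) :
    0 ≤ condMI p Z₁ Z₂ W := by
  set T : Ω → β₁ × β₂ × γ := fun ω => (Z₁ ω, Z₂ ω, W ω) with hT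
  have hlog2 : (0:ℝ) < Real.log 2 := Real.log_pos one_lt_two
  set P : β₁ × β₂ × γ → ℝ := prOf p T with hP
  set P₁ : β₁ × γ → ℝ := prOf p (fun ω => (Z₁ ω, W ω)) with hP₁
  set P₂ : β₂ × γ → ℝ := prOf p (fun ω => (Z₂ ω, W ω)) with hP₂
  set P₃ : γ → ℝ := prOf p W with hP₃
  have hPnn : ∀ t, 0 ≤ P t := fun t => prOf_nonneg p hp T t
  have hP₁nn : ∀ s, 0 ≤ P₁ s := fun s => prOf_nonneg p hp _ s
  have hP₂nn : ∀ s, 0 ≤ P₂ s := fun s => prOf_nonneg p hp _ s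
  have hP₃nn : ∀ c, 0 ≤ P₃ c := fun c => prOf_nonneg p hp _ c
  have hle₁ : ∀ t : β₁ × β₂ × γ, P t ≤ P₁ (t.1, t.2.2) := fun t =>
    prOf_le_comp p hp (fun t : β₁ × β₂ × γ => (t.1, t.2.2)) T t
  have hle₂ : ∀ t : β₁ × β₂ × γ, P t ≤ P₂ (t.2.1, t.2.2) := fun t =>
    prOf_le_comp p hp (fun t : β₁ × β₂ × γ => (t.2.1, t.2.2)) T t
  have hle₃ : ∀ t : β₁ × β₂ × γ, P t ≤ P₃ t.2.2 := fun t =>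
    prOf_le_comp p hp (fun t : β₁ × β₂ × γ => t.2.2) T t
  have e1 : ent p (fun ω => (Z₁ ω, W ω)) = -∑ t, P t * Real.logb 2 (P₁ (t.1, t.2.2)) :=
    ent_comp_eq_sum p (fun t : β₁ × β₂ × γ => (t.1, t.2.2)) T
  have e2 : ent p (fun ω => (Z₂ ω, W ω)) = -∑ t, P t * Real.logb 2 (P₂ (t.2.1, t.2.2)) :=
    ent_comp_eq_sum p (fun t : β₁ × β₂ × γ => (t.2.1, t.2.2)) T
  have e4 : ent p W = -∑ t, P t * Real.logb 2 (P₃ t.2.2) :=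
    ent_comp_eq_sum p (fun t : β₁ × β₂ × γ => t.2.2) T
  have hg₃ : Function.Injective (fun t : β₁ × β₂ × γ => ((t.1, t.2.1), t.2.2)) := by
    intro a b h
    simp only [Prod.mk.injEq] at h
    exact Prod.ext h.1.1 (Prod.ext h.1.2 h.2)
  have e3 : ent p (fun ω => ((Z₁ ω, Z₂ ω), W ω)) = -∑ t, P t * Real.logb 2 (P t) := by
    have h := ent_comp_eq_sum p (fun t : β₁ × β₂ × γ => ((t.1, t.2.1), t.2.2)) T
    rw [h]
    congr 1
    refine Finset.sum_congr rfl fun t _ => ?_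
    rw [prOf_comp_inj p _ hg₃ T t]
  have key : condMI p Z₁ Z₂ W = ∑ t, P t * (Real.logb 2 (P t) + Real.logb 2 (P₃ t.2.2)
      - Real.logb 2 (P₁ (t.1, t.2.2)) - Real.logb 2 (P₂ (t.2.1, t.2.2))) := by
    have step : condMI p Z₁ Z₂ W = (∑ t, P t * Real.logb 2 (P t))
        + (∑ t, P t * Real.logb 2 (P₃ t.2.2))
        - (∑ t, P t * Real.logb 2 (P₁ (t.1, t.2.2)))
        - (∑ t, P t * Real.logb 2 (P₂ (t.2.1, t.2.2))) := by
      unfold condMI condEnt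
      rw [e1, e2, e3, e4]; ring
    rw [step, ← Finset.sum_add_distrib, ← Finset.sum_sub_distrib, ← Finset.sum_sub_distrib]
    exact Finset.sum_congr rfl fun t _ => by ring
  set R : β₁ × β₂ × γ → ℝ := fun t =>
    if 0 < P t then P₁ (t.1, t.2.2) * P₂ (t.2.1, t.2.2) / P₃ t.2.2 else 0 with hR
  have hbound : ∀ t, (P t - R t) / Real.log 2 ≤ P t * (Real.logb 2 (P t)
      + Real.logb 2 (P₃ t.2.2) - Real.logb 2 (P₁ (t.1, t.2.2))
      - Real.logb 2 (P₂ (t.2.1, t.2.2))) := by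
    intro t
    rcases eq_or_lt_of_le (hPnn t) with h0 | hpos
    · rw [hR]; simp [← h0]
    · have h₃ : 0 < P₃ t.2.2 := lt_of_lt_of_le hpos (hle₃ t)
      have h₁ : 0 < P₁ (t.1, t.2.2) := lt_of_lt_of_le hpos (hle₁ t)
      have h₂ : 0 < P₂ (t.2.1, t.2.2) := lt_of_lt_of_le hpos (hle₂ t)
      rw [hR]
      simp only [if_pos hpos]
      set y : ℝ := P₁ (t.1, t.2.2) * P₂ (t.2.1, t.2.2) / (P t * P₃ t.2.2) with hy
      have hypos : 0 < y := div_pos (mul_pos h₁ h₂) (mul_pos hpos h₃)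
      have hlogs : Real.logb 2 (P t) + Real.logb 2 (P₃ t.2.2)
          - Real.logb 2 (P₁ (t.1, t.2.2)) - Real.logb 2 (P₂ (t.2.1, t.2.2))
          = -Real.logb 2 y := by
        rw [hy]
        rw [Real.logb_div (ne_of_gt (mul_pos h₁ h₂)) (ne_of_gt (mul_pos hpos h₃)),
          Real.logb_mul (ne_of_gt h₁) (ne_of_gt h₂),
          Real.logb_mul (ne_of_gt hpos) (ne_of_gt h₃)]
        ring
      rw [hlogs]
      have hlogy : Real.logb 2 y ≤ (y - 1) / Real.log 2 := by
        rw [Real.logb]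
        exact div_le_div_of_nonneg_right (Real.log_le_sub_one_of_pos hypos) hlog2.le
      have : P t * Real.logb 2 y ≤ P t * ((y - 1) / Real.log 2) :=
        mul_le_mul_of_nonneg_left hlogy (le_of_lt hpos)
      have h2 : -(P t * ((y - 1) / Real.log 2)) ≤ P t * -Real.logb 2 y := by
        rw [mul_neg]; linarith
      refine le_trans (le_of_eq ?_) h2
      rw [hy]
      have hPne : P t ≠ 0 := ne_of_gt hpos
      have hP₃ne : P₃ t.2.2 ≠ 0 := ne_of_gt h₃
      field_simp
      ring
  have hsumP : ∑ t, P t = 1 := sum_prOf p hp1 T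
  have hsumR : ∑ t, R t ≤ 1 := by
    have step1 : ∑ t, R t ≤ ∑ t : β₁ × β₂ × γ,
        (if 0 < P₃ t.2.2 then P₁ (t.1, t.2.2) * P₂ (t.2.1, t.2.2) / P₃ t.2.2 else 0) := by
      refine Finset.sum_le_sum fun t _ => ?_
      rw [hR]
      dsimp only
      by_cases h : 0 < P t
      · rw [if_pos h, if_pos (lt_of_lt_of_le h (hle₃ t))]
      · rw [if_neg h]
        split
        · exact div_nonneg (mul_nonneg (hP₁nn _) (hP₂nn _)) (hP₃nn _)
        · exact le_refl 0
    have step2 : ∑ t : β₁ × β₂ × γ,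
        (if 0 < P₃ t.2.2 then P₁ (t.1, t.2.2) * P₂ (t.2.1, t.2.2) / P₃ t.2.2 else 0)
        = ∑ c, (if 0 < P₃ c then P₃ c else 0) := by
      rw [Fintype.sum_prod_type]
      have inner : ∀ a : β₁, (∑ z : β₂ × γ,
          (if 0 < P₃ z.2 then P₁ (a, z.2) * P₂ (z.1, z.2) / P₃ z.2 else 0))
          = ∑ c, ∑ b, (if 0 < P₃ c then P₁ (a, c) * P₂ (b, c) / P₃ c else 0) := by
        intro a
        rw [Fintype.sum_prod_type, Finset.sum_comm]
      simp only [inner]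
      rw [Finset.sum_comm]
      refine Finset.sum_congr rfl fun c _ => ?_
      by_cases h : 0 < P₃ c
      · simp only [if_pos h]
        have hb : ∀ a : β₁, (∑ b, P₁ (a, c) * P₂ (b, c) / P₃ c)
            = P₁ (a, c) * P₃ c / P₃ c := by
          intro a
          rw [← Finset.sum_div, ← Finset.mul_sum, sum_prOf_pair_fst p Z₂ W c]
        simp only [hb]
        rw [← Finset.sum_div, ← Finset.sum_mul, sum_prOf_pair_fst p Z₁ W c,
          mul_div_assoc, div_self (ne_of_gt h), mul_one]
      · simp only [if_neg h, Finset.sum_const_zero]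
    have step3 : (∑ c, (if 0 < P₃ c then P₃ c else 0)) ≤ ∑ c, P₃ c := by
      refine Finset.sum_le_sum fun c _ => ?_
      split
      · exact le_refl _
      · exact hP₃nn c
    have hsum3 : ∑ c, P₃ c = 1 := sum_prOf p hp1 W
    linarith
  calc (0:ℝ) ≤ (∑ t, P t - ∑ t, R t) / Real.log 2 := by
        apply div_nonneg _ (le_of_lt hlog2); rw [hsumP]; linarith
    _ = ∑ t, (P t - R t) / Real.log 2 := by
        rw [← Finset.sum_sub_distrib, Finset.sum_div]
    _ ≤ ∑ t, P t * (Real.logb 2 (P t) + Real.logb 2 (P₃ t.2.2)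
        - Real.logb 2 (P₁ (t.1, t.2.2)) - Real.logb 2 (P₂ (t.2.1, t.2.2))) :=
        Finset.sum_le_sum fun t _ => hbound t
    _ = condMI p Z₁ Z₂ W := key.symm


lemma prod_mul_logb {κ : Type} [DecidableEq κ] (s : Finset κ) (v : κ → ℝ) (hv : ∀ i, 0 ≤ v i) :
    (∏ i ∈ s, v i) * Real.logb 2 (∏ i ∈ s, v i)
      = ∑ i ∈ s, (∏ j ∈ s, v j) * Real.logb 2 (v i) := by
  induction s using Finset.induction with
  | empty => simp
  | insert a s ha ih =>
    rw [Finset.prod_insert ha, Finset.sum_insert ha]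
    by_cases hva : v a = 0
    · simp [hva]
    · by_cases hps : (∏ i ∈ s, v i) = 0
      · simp [hps, Finset.prod_insert ha]
      · have h1 : (v a * ∏ i ∈ s, v i) * Real.logb 2 (v a * ∏ i ∈ s, v i)
            = (v a * ∏ i ∈ s, v i) * Real.logb 2 (v a)
              + v a * ((∏ i ∈ s, v i) * Real.logb 2 (∏ i ∈ s, v i)) := by
          rw [Real.logb_mul hva hps]; ring
        rw [h1, ih, Finset.mul_sum]
        congr 1
        refine Finset.sum_congr rfl fun i hi => ?_
        ring

lemma ent_pi {κ : Type} [Fintype κ] [DecidableEq κ]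
    {β : Type} [Fintype β] [DecidableEq β]
    (Z : Ω → (κ → β)) (q : κ → β → ℝ)
    (hfac : ∀ f, prOf p Z f = ∏ i, q i (f i))
    (hq0 : ∀ i b, 0 ≤ q i b) (hq1 : ∀ i, ∑ b, q i b = 1) :
    ent p Z = ∑ i, (-∑ b, q i b * Real.logb 2 (q i b)) := by
  have hpt : ∀ f : κ → β, prOf p Z f * Real.logb 2 (prOf p Z f)
      = ∑ i, (∏ j, q j (f j)) * Real.logb 2 (q i (f i)) := by
    intro f
    rw [hfac f]
    exact prod_mul_logb Finset.univ (fun j => q j (f j)) (fun j => hq0 j (f j))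
  have inner : ∀ i : κ, (∑ f : κ → β, (∏ j, q j (f j)) * Real.logb 2 (q i (f i)))
      = ∑ b, q i b * Real.logb 2 (q i b) := by
    intro i
    set G : κ → β → ℝ := fun j b => if j = i then q j b * Real.logb 2 (q j b) else q j b with hG
    have hterm : ∀ f : κ → β, (∏ j, q j (f j)) * Real.logb 2 (q i (f i)) = ∏ j, G j (f j) := by
      intro f
      rw [← Finset.prod_erase_mul Finset.univ _ (Finset.mem_univ i),
          ← Finset.prod_erase_mul Finset.univ _ (Finset.mem_univ i)]
      have : ∀ j ∈ Finset.univ.erase i, G j (f j) = q j (f j) := by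
        intro j hj
        rw [hG]; dsimp only
        rw [if_neg (Finset.mem_erase.1 hj).1]
      rw [Finset.prod_congr rfl this]
      have : G i (f i) = q i (f i) * Real.logb 2 (q i (f i)) := by rw [hG]; simp
      rw [this]; ring
    simp only [hterm]
    rw [← Fintype.prod_sum (fun j b => G j b)]
    rw [← Finset.prod_erase_mul Finset.univ _ (Finset.mem_univ i)]
    have h1 : ∀ j ∈ Finset.univ.erase i, (∑ b, G j b) = 1 := by
      intro j hj
      have : ∀ b, G j b = q j b := fun b => by
        rw [hG]; dsimp only; rw [if_neg (Finset.mem_erase.1 hj).1]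
      simp only [this]; exact hq1 j
    rw [Finset.prod_congr rfl h1, Finset.prod_const_one, one_mul]
    refine Finset.sum_congr rfl fun b _ => ?_
    rw [hG]; simp
  unfold ent
  have main : (∑ f, prOf p Z f * Real.logb 2 (prOf p Z f))
      = ∑ i, ∑ b, q i b * Real.logb 2 (q i b) := by
    calc (∑ f, prOf p Z f * Real.logb 2 (prOf p Z f))
        = ∑ f : κ → β, ∑ i, (∏ j, q j (f j)) * Real.logb 2 (q i (f i)) :=
          Finset.sum_congr rfl fun f _ => hpt f
      _ = ∑ i, ∑ f : κ → β, (∏ j, q j (f j)) * Real.logb 2 (q i (f i)) := Finset.sum_comm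
      _ = ∑ i, ∑ b, q i b * Real.logb 2 (q i b) := Finset.sum_congr rfl fun i _ => inner i
  rw [main, ← Finset.sum_neg_distrib]

variable {ι β : Type} [Fintype ι] [DecidableEq ι] [Fintype β] [DecidableEq β]

lemma prOf_joint (X : ι → Ω → β) (hp1 : ∑ ω, p ω = 1)
    (hindep : ∀ x : ι → β, prOf p (fun ω i => X i ω) x = ∏ i, prOf p (X i) (x i))
    (A : Finset ι) (f : A → β) :
    prOf p (joint X A) f = ∏ a : A, prOf p (X a.1) (f a) := by
  have h0 : prOf p (joint X A) f
      = ∑ h : ι → β, if (fun a : A => h a.1) = f then prOf p (fun ω i => X i ω) h else 0 :=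
    prOf_comp p (fun (h : ι → β) (a : A) => h a.1) (fun ω i => X i ω) f
  rw [h0]
  simp only [hindep]
  set e := (Equiv.piEquivPiSubtypeProd (fun i => i ∈ A) (fun _ => β)).symm with he
  rw [← Equiv.sum_comp e (fun h : ι → β =>
    if (fun a : A => h a.1) = f then ∏ i, prOf p (X i) (h i) else 0)]
  rw [Fintype.sum_prod_type]
  have hcond : ∀ (y : ((i : {x // x ∈ A}) → β) × ((i : {x // x ∉ A}) → β)),
      (fun a : A => e y a.1) = y.1 := by
    intro y
    funext a
    rw [he]
    simp [Equiv.piEquivPiSubtypeProd, a.2]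
  have hsplit : ∀ (y : ((i : {x // x ∈ A}) → β) × ((i : {x // x ∉ A}) → β)),
      (∏ i, prOf p (X i) (e y i))
      = (∏ a : {x // x ∈ A}, prOf p (X a.1) (y.1 a)) * ∏ a : {x // x ∉ A}, prOf p (X a.1) (y.2 a) := by
    intro y
    rw [← Fintype.prod_subtype_mul_prod_subtype (fun i => i ∈ A) (fun i => prOf p (X i) (e y i))]
    congr 1
    · refine Finset.prod_congr (congrArg (fun I => @Finset.univ _ I) (Subsingleton.elim _ _))
        fun a _ => ?_
      rw [he]; simp [Equiv.piEquivPiSubtypeProd, a.2]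
    · refine Finset.prod_congr (congrArg (fun I => @Finset.univ _ I) (Subsingleton.elim _ _))
        fun a _ => ?_
      rw [he]; simp [Equiv.piEquivPiSubtypeProd, a.2]
  have hsum2 : (∑ f₂ : ((i : {x // x ∉ A}) → β), ∏ a : {x // x ∉ A}, prOf p (X a.1) (f₂ a)) = 1 := by
    rw [← Fintype.prod_sum (fun (a : {x // x ∉ A}) b => prOf p (X a.1) b)]
    rw [Finset.prod_congr rfl fun a _ => sum_prOf p hp1 (X a.1)]
    exact Finset.prod_const_one
  calc (∑ f₁ : (i : {x // x ∈ A}) → β, ∑ f₂ : (i : {x // x ∉ A}) → β,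
        if (fun a : A => e (f₁, f₂) a.1) = f then ∏ i, prOf p (X i) (e (f₁, f₂) i) else 0)
      = ∑ f₁ : (i : {x // x ∈ A}) → β, (if f₁ = f then
          (∏ a : {x // x ∈ A}, prOf p (X a.1) (f₁ a)) else 0) := by
        refine Finset.sum_congr rfl fun f₁ _ => ?_
        rw [Finset.sum_congr rfl fun f₂ _ => by
          rw [hcond (f₁, f₂), hsplit (f₁, f₂)]]
        by_cases h : f₁ = f
        · simp only [if_pos h]
          rw [← Finset.mul_sum, hsum2, mul_one]
        · simp only [if_neg h, Finset.sum_const_zero]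
    _ = ∏ a : {x // x ∈ A}, prOf p (X a.1) (f a) := by
        rw [Finset.sum_ite_eq' Finset.univ f
          (fun f₁ : (i : {x // x ∈ A}) → β => ∏ a : {x // x ∈ A}, prOf p (X a.1) (f₁ a))]
        simp
    _ = ∏ a : A, prOf p (X a.1) (f a) :=
        Finset.prod_congr (congrArg (fun I => @Finset.univ _ I) (Subsingleton.elim _ _))
          fun a _ => rfl

lemma ent_joint (X : ι → Ω → β) (hp : ∀ ω, 0 ≤ p ω) (hp1 : ∑ ω, p ω = 1)
    (hindep : ∀ x : ι → β, prOf p (fun ω i => X i ω) x = ∏ i, prOf p (X i) (x i))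
    (A : Finset ι) : ent p (joint X A) = ∑ i ∈ A, ent p (X i) := by
  have h := ent_pi p (joint X A) (fun (a : A) b => prOf p (X a.1) b)
    (prOf_joint p X hp1 hindep A) (fun a b => prOf_nonneg p hp _ b)
    (fun a => sum_prOf p hp1 (X a.1))
  rw [h]
  exact Finset.sum_coe_sort A (fun i => ent p (X i))


/-- With `(X_v)` mutually independent and the `Ŷ_w` conditionally independent given
`X_{O_l}`, the function `(U, W) ↦ I(X_U ; Ŷ_W | X_{O_l \ U})` is bisubmodular. -/
theorem stmt4 {Ω ι₁ ι₂ β γ : Type} [Fintype Ω] [Fintype ι₁] [DecidableEq ι₁]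
    [Fintype ι₂] [DecidableEq ι₂] [Fintype β] [DecidableEq β] [Fintype γ] [DecidableEq γ]
    (p : Ω → ℝ) (hp : ∀ ω, 0 ≤ p ω) (hp1 : ∑ ω, p ω = 1)
    (X : ι₁ → Ω → β) (Yh : ι₂ → Ω → γ)
    (hindep : ∀ x : ι₁ → β, prOf p (fun ω i => X i ω) x = ∏ i, prOf p (X i) (x i))
    (hcond : ∀ W : Finset ι₂, condEnt p (joint Yh W) (fun ω i => X i ω) =
        ∑ w ∈ W, condEnt p (Yh w) (fun ω i => X i ω))
    (U₁ U₂ : Finset ι₁) (W₁ W₂ : Finset ι₂) :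
    condMI p (joint X (U₁ ∪ U₂)) (joint Yh (W₁ ∩ W₂)) (joint X (U₁ ∪ U₂)ᶜ) +
      condMI p (joint X (U₁ ∩ U₂)) (joint Yh (W₁ ∪ W₂)) (joint X (U₁ ∩ U₂)ᶜ) ≤
    condMI p (joint X U₁) (joint Yh W₁) (joint X U₁ᶜ) +
      condMI p (joint X U₂) (joint Yh W₂) (joint X U₂ᶜ) := by
  set fullX : Ω → ι₁ → β := fun ω i => X i ω with hfullX
  -- per-node conditional entropies
  have formula : ∀ (U : Finset ι₁) (W : Finset ι₂),
      condMI p (joint X U) (joint Yh W) (joint X Uᶜ)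
        = ent p (fun ω => (joint Yh W ω, joint X Uᶜ ω)) - ∑ i ∈ Uᶜ, ent p (X i)
          - ∑ w ∈ W, condEnt p (Yh w) fullX := by
    intro U W
    have r1 : ent p (fun ω => (joint X U ω, joint X Uᶜ ω)) = ent p fullX := by
      refine ent_congr_inj p _ fullX
        (fun x => ((fun a : U => x a.1), (fun a : (Uᶜ : Finset ι₁) => x a.1))) ?_ (fun ω => rfl)
      intro x y h
      funext i
      by_cases hi : i ∈ U
      · exact congrFun (congrArg Prod.fst h) ⟨i, hi⟩
      · exact congrFun (congrArg Prod.snd h) ⟨i, Finset.mem_compl.2 hi⟩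
    have r2 : ent p (fun ω => ((joint X U ω, joint Yh W ω), joint X Uᶜ ω))
        = ent p (fun ω => (joint Yh W ω, fullX ω)) := by
      refine ent_congr_inj p _ _
        (fun z : (W → γ) × (ι₁ → β) =>
          (((fun a : U => z.2 a.1), z.1), (fun a : (Uᶜ : Finset ι₁) => z.2 a.1))) ?_ (fun ω => rfl)
      intro x y h
      have h1 : x.1 = y.1 := congrArg (fun t => t.1.2) h
      have h2 : x.2 = y.2 := by
        funext i
        by_cases hi : i ∈ U
        · exact congrFun (congrArg (fun t => t.1.1) h) ⟨i, hi⟩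
        · exact congrFun (congrArg Prod.snd h) ⟨i, Finset.mem_compl.2 hi⟩
      exact Prod.ext h1 h2
    have r3 := hcond W
    unfold condEnt at r3
    have r4 : ent p (joint X Uᶜ) = ∑ i ∈ Uᶜ, ent p (X i) :=
      ent_joint p X hp hp1 hindep Uᶜ
    unfold condMI condEnt
    rw [r1, r2, r4]
    rw [hfullX] at r3 ⊢
    linarith [r3]
  have submod : ∀ (S₁ S₂ : Finset ι₂) (A B : Finset ι₁),
      ent p (fun ω => (joint Yh (S₁ ∩ S₂) ω, joint X (A ∩ B) ω))
        + ent p (fun ω => (joint Yh (S₁ ∪ S₂) ω, joint X (A ∪ B) ω))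
      ≤ ent p (fun ω => (joint Yh S₁ ω, joint X A ω))
        + ent p (fun ω => (joint Yh S₂ ω, joint X B ω)) := by
    intro S₁ S₂ A B
    have h0 := condMI_nonneg p hp hp1
      (fun ω => (joint Yh S₁ ω, joint X A ω))
      (fun ω => (joint Yh S₂ ω, joint X B ω))
      (fun ω => (joint Yh (S₁ ∩ S₂) ω, joint X (A ∩ B) ω))
    unfold condMI condEnt at h0
    have q1 : ent p (fun ω => ((joint Yh S₁ ω, joint X A ω),
          (joint Yh (S₁ ∩ S₂) ω, joint X (A ∩ B) ω)))
        = ent p (fun ω => (joint Yh S₁ ω, joint X A ω)) := by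
      refine ent_congr_inj p _ _
        (fun z : (S₁ → γ) × (A → β) =>
          (z, ((fun w : (S₁ ∩ S₂ : Finset ι₂) => z.1 ⟨w.1, (Finset.mem_inter.1 w.2).1⟩),
               (fun a : (A ∩ B : Finset ι₁) => z.2 ⟨a.1, (Finset.mem_inter.1 a.2).1⟩))))
        ?_ (fun ω => rfl)
      intro x y h
      exact congrArg Prod.fst h
    have q2 : ent p (fun ω => ((joint Yh S₂ ω, joint X B ω),
          (joint Yh (S₁ ∩ S₂) ω, joint X (A ∩ B) ω)))
        = ent p (fun ω => (joint Yh S₂ ω, joint X B ω)) := by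
      refine ent_congr_inj p _ _
        (fun z : (S₂ → γ) × (B → β) =>
          (z, ((fun w : (S₁ ∩ S₂ : Finset ι₂) => z.1 ⟨w.1, (Finset.mem_inter.1 w.2).2⟩),
               (fun a : (A ∩ B : Finset ι₁) => z.2 ⟨a.1, (Finset.mem_inter.1 a.2).2⟩))))
        ?_ (fun ω => rfl)
      intro x y h
      exact congrArg Prod.fst h
    have q3 : ent p (fun ω => (((joint Yh S₁ ω, joint X A ω),
          (joint Yh S₂ ω, joint X B ω)),
          (joint Yh (S₁ ∩ S₂) ω, joint X (A ∩ B) ω)))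
        = ent p (fun ω => (joint Yh (S₁ ∪ S₂) ω, joint X (A ∪ B) ω)) := by
      refine ent_congr_inj p _ _
        (fun z : ((S₁ ∪ S₂ : Finset ι₂) → γ) × ((A ∪ B : Finset ι₁) → β) =>
          ((((fun w : S₁ => z.1 ⟨w.1, Finset.mem_union_left _ w.2⟩),
             (fun a : A => z.2 ⟨a.1, Finset.mem_union_left _ a.2⟩)),
            ((fun w : S₂ => z.1 ⟨w.1, Finset.mem_union_right _ w.2⟩),
             (fun a : B => z.2 ⟨a.1, Finset.mem_union_right _ a.2⟩))),
           ((fun w : (S₁ ∩ S₂ : Finset ι₂) => z.1 ⟨w.1, Finset.mem_union_left _ (Finset.mem_inter.1 w.2).1⟩),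
            (fun a : (A ∩ B : Finset ι₁) => z.2 ⟨a.1, Finset.mem_union_left _ (Finset.mem_inter.1 a.2).1⟩))))
        ?_ (fun ω => rfl)
      intro x y h
      refine Prod.ext ?_ ?_
      · funext w
        rcases Finset.mem_union.1 w.2 with hw | hw
        · exact congrFun (congrArg (fun t => t.1.1.1) h) ⟨w.1, hw⟩
        · exact congrFun (congrArg (fun t => t.1.2.1) h) ⟨w.1, hw⟩
      · funext a
        rcases Finset.mem_union.1 a.2 with ha | ha
        · exact congrFun (congrArg (fun t => t.1.1.2) h) ⟨a.1, ha⟩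
        · exact congrFun (congrArg (fun t => t.1.2.2) h) ⟨a.1, ha⟩
    rw [q1, q2, q3] at h0
    linarith
  rw [formula (U₁ ∪ U₂) (W₁ ∩ W₂), formula (U₁ ∩ U₂) (W₁ ∪ W₂), formula U₁ W₁, formula U₂ W₂]
  rw [Finset.compl_union U₁ U₂, Finset.compl_inter U₁ U₂]
  have hse : (∑ i ∈ (U₁ ∪ U₂)ᶜ, ent p (X i)) + ∑ i ∈ (U₁ ∩ U₂)ᶜ, ent p (X i)
      = (∑ i ∈ U₁ᶜ, ent p (X i)) + ∑ i ∈ U₂ᶜ, ent p (X i) := by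
    rw [Finset.compl_union, Finset.compl_inter, add_comm]
    exact Finset.sum_union_inter
  have hsc : (∑ w ∈ W₁ ∩ W₂, condEnt p (Yh w) fullX) + ∑ w ∈ W₁ ∪ W₂, condEnt p (Yh w) fullX
      = (∑ w ∈ W₁, condEnt p (Yh w) fullX) + ∑ w ∈ W₂, condEnt p (Yh w) fullX := by
    rw [add_comm]
    exact Finset.sum_union_inter
  have hsub := submod W₁ W₂ U₁ᶜ U₂ᶜ
  rw [Finset.compl_union U₁ U₂, Finset.compl_inter U₁ U₂] at hse
  linarith


end
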